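/- Lower bound with i.i.d. losses: let W > 0, G > 0, and integers 1 ≤ k ≤ T. Let ξ_1,…,ξ_T be i.i.d. Rademacher random variables (uniform on {−1,+1}), and for each t let w_t : {−1,+1}^{t−1} → [−W, W] be an arbitrary measurable function (the learner's predictions, with w_t evaluated at (ξ_1,…,ξ_{t−1})). For ζ ∈ {−1,+1} define u_ζ = −W·ζ and the random set S_ζ = {t ∈ [k] : ξ_t = ζ} ∪ {k+1,…,T}, which always satisfies T − |S_ζ| ≤ k. Then the average over ζ ∈ {−1,+1} of E[Σ_{t∈S_ζ} G·ξ_t·(w_t − u_ζ)] equals G·W·k/2; in particular there exists ζ ∈ {−1,+1} such that E[Σ_{t∈S_ζ} G·ξ_t·(w_t − u_ζ)] ≥ G·W·k/2 = D·G·k/4, where D = 2W is the diameter of the domain [−W, W]. Moreover the losses f_t(w) = G·ξ_t·w have |∇f_t| = G on all rounds, so G(S_ζ) = G. -/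

import Mathlib

open MeasureTheory ProbabilityTheory

private lemma comap_vector {Ω ι : Type*} [MeasurableSpace Ω] (g : ι → Ω → ℝ) :
    MeasurableSpace.comap (fun ω (i : ι) => g i ω) inferInstance
      = ⨆ i, MeasurableSpace.comap (g i) inferInstance := by
  show MeasurableSpace.comap _ MeasurableSpace.pi = _
  simp_rw [MeasurableSpace.pi, MeasurableSpace.comap_iSup, MeasurableSpace.comap_comp,
    Function.comp_def]

private lemma indep_aux {Ω : Type*} [MeasurableSpace Ω] {μ : Measure Ω}
    (ξ : ℕ → Ω → ℝ) (hξmeas : ∀ t, Measurable (ξ t))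
    (hiid : iIndepFun ξ μ) (t : ℕ) (v : Ω → ℝ)
    (hv : Measurable[MeasurableSpace.comap (fun ω (s : Fin t) => ξ s ω) inferInstance] v) :
    IndepFun (ξ t) v μ := by
  have hXY := hiid.indepFun_finset {t} (Finset.range t) (by simp) hξmeas
  rw [IndepFun_iff] at hXY ⊢
  have hle1 : MeasurableSpace.comap (ξ t) inferInstance
      ≤ MeasurableSpace.comap (fun a (i : ({t} : Finset ℕ)) => ξ i a) inferInstance := by
    rw [comap_vector]
    exact le_iSup (fun i : ({t} : Finset ℕ) =>
      MeasurableSpace.comap (ξ i) inferInstance) ⟨t, by simp⟩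
  have hle2 : MeasurableSpace.comap (fun ω (s : Fin t) => ξ s ω) inferInstance
      ≤ MeasurableSpace.comap (fun a (i : (Finset.range t : Finset ℕ)) => ξ i a)
        inferInstance := by
    rw [comap_vector, comap_vector]
    exact iSup_le fun s => le_iSup (fun i : (Finset.range t : Finset ℕ) =>
      MeasurableSpace.comap (ξ i) inferInstance) ⟨(s : ℕ), by simp [s.2]⟩
  exact fun s1 s2 hs1 hs2 => hXY s1 s2 (hle1 s1 hs1) (hle2 s2 (hv.comap_le s2 hs2))

private lemma int_xi {Ω : Type*} [MeasurableSpace Ω] {μ : Measure Ω} (ξ : Ω → ℝ)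
    (hm : Measurable ξ)
    (hlaw : Measure.map ξ μ =
      (2 : ENNReal)⁻¹ • Measure.dirac (-1) + (2 : ENNReal)⁻¹ • Measure.dirac 1) :
    ∫ ω, ξ ω ∂μ = 0 := by
  have hid : ∀ a : ℝ, Integrable (fun x : ℝ => x) ((2 : ENNReal)⁻¹ • Measure.dirac a) := by
    intro a
    refine Integrable.smul_measure ⟨measurable_id.aestronglyMeasurable, ?_⟩ (by simp)
    simp [HasFiniteIntegral, lintegral_dirac]
  have h1 : ∫ ω, ξ ω ∂μ = ∫ x, x ∂(Measure.map ξ μ) :=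
    (integral_map hm.aemeasurable measurable_id.aestronglyMeasurable).symm
  rw [h1, hlaw, integral_add_measure (hid _) (hid _), integral_smul_measure,
    integral_smul_measure, integral_dirac, integral_dirac]
  norm_num

/-- The random inlier set `S_ζ = {t ∈ [k] : ξ_t = ζ} ∪ {k+1,…,T}` (0-indexed as
`{t < k : ξ t = ζ} ∪ {k,…,T-1}`). -/
noncomputable def radInlierSet {Ω : Type*} (k T : ℕ) (ξ : ℕ → Ω → ℝ) (ζ : ℝ) (ω : Ω) :
    Finset ℕ :=
  ((Finset.range k).filter fun t => ξ t ω = ζ) ∪ Finset.Ico k T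

/-- Theorem 2, lower bound with i.i.d. losses.  The losses are
`f_t(w) = G ξ_t w` on the domain `[-W, W]`, with `ξ_t` i.i.d. Rademacher, so the robust
regret on `S_ζ` against `u_ζ = -W ζ` is `∑_{t ∈ S_ζ} G ξ_t (w_t - u_ζ)`.  The set `S_ζ`
always leaves out at most `k` rounds; the average over `ζ ∈ {-1,1}` of the expected
robust regret equals `G W k / 2`, hence for some `ζ` the expected robust regret is at
least `G W k / 2 = D G k / 4` with `D = 2W`; and every gradient satisfies `|G ξ_t| = G`
(so that `G(S_ζ) = G`). -/
theorem lower_bound_iid_losses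
    {Ω : Type*} [MeasurableSpace Ω] (μ : Measure Ω) [IsProbabilityMeasure μ]
    (W G : ℝ) (hW : 0 < W) (hG : 0 < G)
    (T k : ℕ) (hk : 1 ≤ k) (hkT : k ≤ T)
    (ξ : ℕ → Ω → ℝ) (hξmeas : ∀ t, Measurable (ξ t))
    (hξval : ∀ t ω, ξ t ω ∈ ({-1, 1} : Set ℝ))
    (hiid : iIndepFun ξ μ)
    (hlaw : ∀ t, Measure.map (ξ t) μ =
      (2 : ENNReal)⁻¹ • Measure.dirac (-1) + (2 : ENNReal)⁻¹ • Measure.dirac 1)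
    (w : ℕ → Ω → ℝ) (hwdom : ∀ t ω, w t ω ∈ Set.Icc (-W) W)
    (hwmeas : ∀ t, Measurable[MeasurableSpace.comap
      (fun ω (s : Fin t) => ξ s ω) inferInstance] (w t)) :
    (∀ ζ : ℝ, ∀ ω : Ω, T - (radInlierSet k T ξ ζ ω).card ≤ k) ∧
    (∫ ω, ∑ t ∈ radInlierSet k T ξ 1 ω, G * ξ t ω * (w t ω - (-W * 1)) ∂μ
      + ∫ ω, ∑ t ∈ radInlierSet k T ξ (-1) ω, G * ξ t ω * (w t ω - (-W * (-1))) ∂μ) / 2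
      = G * W * k / 2 ∧
    (∃ ζ ∈ ({-1, 1} : Set ℝ),
      G * W * k / 2 ≤
        ∫ ω, ∑ t ∈ radInlierSet k T ξ ζ ω, G * ξ t ω * (w t ω - (-W * ζ)) ∂μ) ∧
    G * W * k / 2 = 2 * W * G * k / 4 ∧
    (∀ t < T, ∀ ω, |G * ξ t ω| = G) := by
  have hξcases : ∀ t ω, ξ t ω = -1 ∨ ξ t ω = 1 := fun t ω => by simpa using hξval t ω
  have hwm : ∀ t, Measurable (w t) := fun t =>
    (hwmeas t).mono (Measurable.comap_le (measurable_pi_lambda _ fun s => hξmeas (s : ℕ)))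
      le_rfl
  have hξabs : ∀ t ω, |ξ t ω| = 1 := by
    intro t ω; rcases hξcases t ω with h | h <;> simp [h]
  have habs : ∀ ζ : ℝ, ζ = 1 ∨ ζ = -1 → ∀ t ω,
      |G * ξ t ω * (w t ω - (-W * ζ))| ≤ G * (2 * W) := by
    intro ζ hζ t ω
    have hw1 := (hwdom t ω).1
    have hw2 := (hwdom t ω).2
    rw [abs_mul, abs_mul, abs_of_pos hG, hξabs t ω, mul_one]
    have h2 : |w t ω - (-W * ζ)| ≤ 2 * W := by
      rcases hζ with rfl | rfl <;> rw [abs_le] <;> constructor <;> nlinarith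
    nlinarith
  have hint : ∀ ζ : ℝ, ζ = 1 ∨ ζ = -1 → ∀ t,
      Integrable (fun ω => G * ξ t ω * (w t ω - (-W * ζ))) μ := by
    intro ζ hζ t
    refine (integrable_const (G * (2 * W))).mono'
      ((((measurable_const.mul (hξmeas t)).mul
        ((hwm t).sub measurable_const))).aestronglyMeasurable) ?_
    exact ae_of_all _ fun ω => by
      rw [Real.norm_eq_abs]; exact habs ζ hζ t ω
  have hint_if : ∀ ζ : ℝ, ζ = 1 ∨ ζ = -1 → ∀ t,
      Integrable (fun ω => if ξ t ω = ζ then G * ξ t ω * (w t ω - (-W * ζ)) else 0) μ := by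
    intro ζ hζ t
    refine (integrable_const (G * (2 * W))).mono' ?_ ?_
    · refine Measurable.aestronglyMeasurable (Measurable.ite ?_
        ((measurable_const.mul (hξmeas t)).mul ((hwm t).sub measurable_const))
        measurable_const)
      exact hξmeas t (measurableSet_singleton ζ)
    · refine ae_of_all _ fun ω => ?_
      by_cases h : ξ t ω = ζ
      · rw [if_pos h, Real.norm_eq_abs]; exact habs ζ hζ t ω
      · rw [if_neg h, norm_zero]; positivity
  have hzero : ∀ t, ∫ ω, ξ t ω * w t ω ∂μ = 0 := by
    intro t
    have hind : IndepFun (ξ t) (w t) μ := indep_aux ξ hξmeas hiid t (w t) (hwmeas t)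
    have hξint : Integrable (ξ t) μ :=
      (integrable_const (1 : ℝ)).mono' (hξmeas t).aestronglyMeasurable
        (ae_of_all _ fun ω => by rw [Real.norm_eq_abs, hξabs t ω])
    have hwint : Integrable (w t) μ :=
      (integrable_const W).mono' (hwm t).aestronglyMeasurable
        (ae_of_all _ fun ω => by
          rw [Real.norm_eq_abs, abs_le]; exact ⟨(hwdom t ω).1, (hwdom t ω).2⟩)
    have hm := hind.integral_mul_eq_mul_integral hξint.aestronglyMeasurable hwint.aestronglyMeasurable
    rw [show (fun ω => ξ t ω * w t ω) = ξ t * w t from rfl, hm,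
      int_xi (ξ t) (hξmeas t) (hlaw t), zero_mul]
  have hA : ∀ ζ : ℝ, ∀ ω, (∑ t ∈ radInlierSet k T ξ ζ ω, G * ξ t ω * (w t ω - (-W * ζ)))
      = (∑ t ∈ Finset.range k, if ξ t ω = ζ then G * ξ t ω * (w t ω - (-W * ζ)) else 0)
        + ∑ t ∈ Finset.Ico k T, G * ξ t ω * (w t ω - (-W * ζ)) := by
    intro ζ ω
    rw [radInlierSet, Finset.sum_union, Finset.sum_filter]
    exact Finset.disjoint_left.2 fun a ha hb => by
      simp only [Finset.mem_filter, Finset.mem_range, Finset.mem_Ico] at ha hb; omega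
  have hAint : ∀ ζ : ℝ, ζ = 1 ∨ ζ = -1 →
      Integrable (fun ω => ∑ t ∈ radInlierSet k T ξ ζ ω,
        G * ξ t ω * (w t ω - (-W * ζ))) μ := by
    intro ζ hζ
    rw [show (fun ω => ∑ t ∈ radInlierSet k T ξ ζ ω, G * ξ t ω * (w t ω - (-W * ζ)))
        = fun ω => (∑ t ∈ Finset.range k,
            if ξ t ω = ζ then G * ξ t ω * (w t ω - (-W * ζ)) else 0)
          + ∑ t ∈ Finset.Ico k T, G * ξ t ω * (w t ω - (-W * ζ)) from funext (hA ζ)]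
    exact (integrable_finset_sum _ fun t _ => hint_if ζ hζ t).add
      (integrable_finset_sum _ fun t _ => hint ζ hζ t)
  have hxwint : ∀ t, Integrable (fun ω => ξ t ω * w t ω) μ := by
    intro t
    refine (integrable_const W).mono' ((hξmeas t).mul (hwm t)).aestronglyMeasurable
      (ae_of_all _ fun ω => ?_)
    rw [Real.norm_eq_abs, abs_mul, hξabs t ω, one_mul, abs_le]
    exact ⟨(hwdom t ω).1, (hwdom t ω).2⟩
  have hmain : ∫ ω, ∑ t ∈ radInlierSet k T ξ 1 ω, G * ξ t ω * (w t ω - (-W * 1)) ∂μ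
      + ∫ ω, ∑ t ∈ radInlierSet k T ξ (-1) ω, G * ξ t ω * (w t ω - (-W * (-1))) ∂μ
      = G * W * k := by
    rw [← integral_add (hAint 1 (Or.inl rfl)) (hAint (-1) (Or.inr rfl))]
    have hpt : ∀ ω, (∑ t ∈ radInlierSet k T ξ 1 ω, G * ξ t ω * (w t ω - (-W * 1)))
        + ∑ t ∈ radInlierSet k T ξ (-1) ω, G * ξ t ω * (w t ω - (-W * (-1)))
        = (∑ t ∈ Finset.range k, (G * W + G * (ξ t ω * w t ω)))
          + ∑ t ∈ Finset.Ico k T, 2 * G * (ξ t ω * w t ω) := by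
      intro ω
      rw [hA 1 ω, hA (-1) ω]
      have h1 : ∀ t ∈ Finset.range k,
          ((if ξ t ω = 1 then G * ξ t ω * (w t ω - (-W * 1)) else 0)
            + if ξ t ω = -1 then G * ξ t ω * (w t ω - (-W * (-1))) else 0)
          = G * W + G * (ξ t ω * w t ω) := by
        intro t _
        rcases hξcases t ω with h | h <;> rw [h] <;> norm_num <;> ring
      have h2 : ∀ t ∈ Finset.Ico k T,
          (G * ξ t ω * (w t ω - (-W * 1)) + G * ξ t ω * (w t ω - (-W * (-1))))
          = 2 * G * (ξ t ω * w t ω) := fun t _ => by ring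
      rw [← Finset.sum_congr rfl h1, ← Finset.sum_congr rfl h2,
        Finset.sum_add_distrib, Finset.sum_add_distrib]
      ring
    rw [integral_congr_ae (ae_of_all _ hpt)]
    have hI1 : ∀ t, Integrable (fun ω => G * W + G * (ξ t ω * w t ω)) μ := fun t =>
      (integrable_const (G * W)).add ((hxwint t).const_mul G)
    have hI2 : ∀ t, Integrable (fun ω => 2 * G * (ξ t ω * w t ω)) μ := fun t =>
      (hxwint t).const_mul (2 * G)
    rw [integral_add (integrable_finset_sum _ fun t _ => hI1 t)
        (integrable_finset_sum _ fun t _ => hI2 t),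
      integral_finset_sum _ fun t _ => hI1 t, integral_finset_sum _ fun t _ => hI2 t]
    have e1 : ∀ t, ∫ ω, (G * W + G * (ξ t ω * w t ω)) ∂μ = G * W := by
      intro t
      rw [integral_add (integrable_const _) ((hxwint t).const_mul G),
        integral_const, integral_const_mul, hzero t, mul_zero, add_zero]
      simp
    have e2 : ∀ t, ∫ ω, 2 * G * (ξ t ω * w t ω) ∂μ = 0 := by
      intro t; rw [integral_const_mul, hzero t, mul_zero]
    simp only [e1, e2, Finset.sum_const, Finset.card_range, Finset.sum_const_zero,
      add_zero, nsmul_eq_mul]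
    ring
  refine ⟨?_, ?_, ?_, by ring, ?_⟩
  · intro ζ ω
    have h1 : Finset.Ico k T ⊆ radInlierSet k T ξ ζ ω := Finset.subset_union_right
    have h2 := Finset.card_le_card h1
    rw [Nat.card_Ico] at h2
    omega
  · rw [hmain]
  · rcases le_total
      (∫ ω, ∑ t ∈ radInlierSet k T ξ 1 ω, G * ξ t ω * (w t ω - (-W * 1)) ∂μ)
      (∫ ω, ∑ t ∈ radInlierSet k T ξ (-1) ω, G * ξ t ω * (w t ω - (-W * (-1))) ∂μ)
      with h | h
    · exact ⟨-1, by simp, by linarith⟩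
    · exact ⟨1, by simp, by linarith⟩
  · intro t _ ω
    rcases hξcases t ω with h | h <;> rw [h] <;> simp [abs_of_pos hG]
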